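/- Let h be an idempotent endomorphism of the free monoid on S, and let w be a word in the image of h. Write the letters of w not sent to 1 by h∘of as α_1, …, α_p (with multiplicity). Then for each i, the word h(of α_i) contains exactly one occurrence of a letter not sent to 1 by h∘of. -/

import Mathlib

open FreeMonoid

instance freeMonoidDecEq {S : Type u} [DecidableEq S] : DecidableEq (FreeMonoid S) :=
  inferInstanceAs (DecidableEq (List S))

private lemma list_eq_of_sum_eq_sum {α : Type*} (f g : α → ℕ) :
    ∀ (l : List α), (l.map f).sum = (l.map g).sum → (∀ a ∈ l, g a ≤ f a) →
      ∀ a ∈ l, f a = g a := by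
  intro l
  induction l with
  | nil => simp
  | cons b t ih =>
    intro hsum hle a ha
    simp only [List.map_cons, List.sum_cons] at hsum
    have hb : g b ≤ f b := hle b List.mem_cons_self
    have ht : (t.map g).sum ≤ (t.map f).sum :=
      List.sum_le_sum (fun y hy => hle y (List.mem_cons_of_mem _ hy))
    have hfb : f b = g b ∧ (t.map f).sum = (t.map g).sum := by omega
    rcases List.mem_cons.mp ha with rfl | ha'
    · exact hfb.1
    · exact ih hfb.2 (fun x hx => hle x (List.mem_cons_of_mem _ hx)) a ha'

theorem image_letters_single_occurrence {S : Type u} [DecidableEq S]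
    (h : FreeMonoid S →* FreeMonoid S) (hidem : ∀ x, h (h x) = h x)
    (w : FreeMonoid S) (hw : ∃ x, h x = w) :
    ∀ a ∈ w.toList, h (of a) ≠ 1 →
      ((h (of a)).toList.countP (fun t => decide (h (of t) ≠ 1))) = 1 := by
  obtain ⟨x, rfl⟩ := hw
  set p : S → Bool := fun t => decide (h (of t) ≠ 1) with hp
  set w := h x with hwdef
  have hww : h w = w := hidem x
  -- count function
  set cnt : FreeMonoid S → ℕ := fun u => u.toList.countP p with hcnt
  -- h expressed via lift
  have hlift : ∀ u : FreeMonoid S, h u = ((toList u).map (fun a => h (of a))).prod := by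
    intro u
    rw [← lift_apply (fun a => h (of a)) u]
    exact DFunLike.congr_fun (lift_restrict h).symm u
  -- cnt of a product of a list
  have hcntprod : ∀ l : List (FreeMonoid S), cnt l.prod = (l.map cnt).sum := by
    intro l
    induction l with
    | nil => rfl
    | cons b t ih =>
      simp only [List.prod_cons, List.map_cons, List.sum_cons, ← ih]
      show List.countP p (toList (b * t.prod)) = _
      rw [toList_mul, List.countP_append]
  -- each letter a of w with p a has cnt (h (of a)) ≥ 1
  have hge : ∀ a : S, h (of a) ≠ 1 → 1 ≤ cnt (h (of a)) := by
    intro a hne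
    by_contra hc
    push_neg at hc
    interval_cases hcc : cnt (h (of a))
    have hall : ∀ t ∈ toList (h (of a)), h (of t) = 1 := by
      intro t ht
      have := List.countP_eq_zero.mp hcc t ht
      simpa [hp] using this
    have : h (h (of a)) = 1 := by
      rw [hlift (h (of a))]
      apply List.prod_eq_one
      intro y hy
      simp only [List.mem_map] at hy
      obtain ⟨t, ht, rfl⟩ := hy
      exact hall t ht
    rw [hidem] at this
    exact hne this
  -- cnt not-p letters give 0
  have h0 : ∀ a : S, h (of a) = 1 → cnt (h (of a)) = 0 := by
    intro a h1
    rw [h1]; rfl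
  -- sum identity
  have key : ((toList w).map (fun a => cnt (h (of a)))).sum
      = ((toList w).map (fun a => if p a then 1 else 0)).sum := by
    have : cnt w = ((toList w).map (fun a => cnt (h (of a)))).sum := by
      conv_lhs => rw [← hww, hlift]
      rw [hcntprod, List.map_map]
      rfl
    rw [← this]
    have : ((toList w).map (fun a => if p a then 1 else 0)).sum
        = List.countP p (toList w) := by
      induction (toList w) with
      | nil => rfl
      | cons b t ih =>
        rw [List.map_cons, List.sum_cons, ih, List.countP_cons]
        by_cases hb : p b <;> simp [hb] <;> omega
    rw [this]
  have hle : ∀ a ∈ toList w, (if p a then 1 else 0) ≤ cnt (h (of a)) := by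
    intro a _
    by_cases ha : h (of a) = 1
    · simp [hp, ha, h0 a ha]
    · simpa [hp, ha] using hge a ha
  intro a ha hne
  have := list_eq_of_sum_eq_sum (fun a => cnt (h (of a)))
    (fun a => if p a then 1 else 0) (toList w) key hle a ha
  have hpa : p a = true := by simp [hp, hne]
  rw [if_pos hpa] at this
  exact this
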